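/- Let 0 < q < 1, δ ∈ {0,1,2} and ν ∈ ℝ. Define g(s) = q^{−δs²/4 + (2+δ)s/2} Γ_{q²}((s+iν)/2) Γ_{q²}((s−iν)/2) for s ∈ ℂ such that both q²-Gamma values are defined. Then g satisfies the recurrence q^{−s} (1 − q^{s+iν})(1 − q^{s−iν}) g(s) = (1−q²)² q^{(δ−1)s − 2} g(s+2) for all such s; i.e. g is the Mellin-space solution of the relativistic Toda q-difference equation. -/

import Mathlib

/-- The infinite q-Pochhammer symbol `(a;Q)_∞ = ∏_{j≥0} (1 − a Q^j)`. -/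
noncomputable def qPochInf (Q a : ℂ) : ℂ :=
  ∏' j : ℕ, (1 - a * Q ^ j)

/-- `q^w = exp(w ln q)` for real `q > 0` and complex `w`. -/
noncomputable def qpow (q : ℝ) (w : ℂ) : ℂ := Complex.exp (w * (Real.log q : ℂ))

/-- The q²-Gamma function `Γ_{q²}(x) = (q²;q²)_∞(1−q²)^{1−x}/(q^{2x};q²)_∞`. -/
noncomputable def qGamma2 (q : ℝ) (x : ℂ) : ℂ :=
  qPochInf ((q : ℂ) ^ 2) ((q : ℂ) ^ 2)
    * Complex.exp ((1 - x) * (Real.log (1 - q ^ 2) : ℂ))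
    / qPochInf ((q : ℂ) ^ 2) (qpow q (2 * x))

/-- The Mellin-space integrand
`g(s) = q^{−δs²/4 + (2+δ)s/2} Γ_{q²}((s+iν)/2) Γ_{q²}((s−iν)/2)`. -/
noncomputable def gMB (q : ℝ) (δ : ℕ) (ν : ℝ) (s : ℂ) : ℂ :=
  qpow q (-((δ : ℂ) * s ^ 2 / 4) + (2 + (δ : ℂ)) * s / 2)
    * qGamma2 q ((s + Complex.I * ν) / 2) * qGamma2 q ((s - Complex.I * ν) / 2)

open Complex Filter

lemma multipliable_qPoch {Q : ℂ} (hQ : ‖Q‖ < 1) (b : ℂ) :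
    Multipliable (fun j : ℕ ↦ 1 - b * Q ^ j) := by
  by_cases hz : ∃ j0 : ℕ, 1 - b * Q ^ j0 = 0
  · obtain ⟨j0, hj0⟩ := hz
    refine ⟨0, ?_⟩
    have hev : ∀ᶠ F in (atTop : Filter (Finset ℕ)),
        (∏ j ∈ F, (1 - b * Q ^ j)) = 0 := by
      refine eventually_atTop.2 ⟨{j0}, fun F hF => Finset.prod_eq_zero ?_ hj0⟩
      simpa using hF
    exact tendsto_const_nhds.congr' (hev.mono fun F h => h.symm)
  · push_neg at hz
    have hten : Tendsto (fun n : ℕ => ‖b‖ * ‖Q‖ ^ n) atTop (nhds 0) := by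
      simpa using (tendsto_pow_atTop_nhds_zero_of_lt_one (norm_nonneg Q) hQ).const_mul ‖b‖
    have hsum : Summable (fun n : ℕ => Complex.log (1 - b * Q ^ n)) := by
      refine Summable.of_norm_bounded_eventually_nat
        (g := fun n => (3/2) * (‖b‖ * ‖Q‖ ^ n)) ?_ ?_
      · exact ((summable_geometric_of_lt_one (norm_nonneg Q) hQ).mul_left ‖b‖).mul_left (3/2)
      · filter_upwards [hten.eventually_le_const (by norm_num : (0:ℝ) < 1/2)] with n hn
        have hb : ‖-(b * Q ^ n)‖ ≤ 1/2 := by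
          simpa [norm_mul, norm_pow] using hn
        have := Complex.norm_log_one_add_half_le_self hb
        simpa [norm_mul, norm_pow, sub_eq_add_neg, mul_assoc] using this
    exact Complex.multipliable_of_summable_log hsum

lemma qPoch_shift {Q : ℂ} (hQ : ‖Q‖ < 1) (a : ℂ) :
    qPochInf Q a = (1 - a) * qPochInf Q (Q * a) := by
  unfold qPochInf
  have h := tprod_eq_zero_mul' (f := fun j : ℕ => 1 - a * Q ^ j)
    (by
      have := multipliable_qPoch hQ (a * Q)
      refine this.congr fun n => ?_
      ring_nf)
  rw [h]
  simp only [pow_zero, mul_one]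
  congr 1
  exact tprod_congr fun n => by ring

lemma qpow_add (q : ℝ) (w z : ℂ) : qpow q (w + z) = qpow q w * qpow q z := by
  unfold qpow; rw [add_mul, Complex.exp_add]

lemma qpow_two {q : ℝ} (hq0 : 0 < q) : qpow q 2 = (q : ℂ) ^ 2 := by
  unfold qpow
  rw [show ((2:ℂ) * (Real.log q : ℂ)) = (Real.log q : ℂ) + (Real.log q : ℂ) by ring,
    Complex.exp_add, ← Complex.ofReal_exp, Real.exp_log hq0]
  ring

/-- `g(s) = q^{−δs²/4+(2+δ)s/2}Γ_{q²}((s+iν)/2)Γ_{q²}((s−iν)/2)` is the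
Mellin-space solution of the relativistic Toda q-difference equation: it
satisfies `q^{−s}(1−q^{s+iν})(1−q^{s−iν})g(s) = (1−q²)² q^{(δ−1)s−2} g(s+2)`
wherever the q²-Gamma values are defined. -/

theorem gMB_recurrence (q : ℝ) (hq0 : 0 < q) (hq1 : q < 1)
    (δ : ℕ) (hδ : δ = 0 ∨ δ = 1 ∨ δ = 2) (ν : ℝ) (s : ℂ)
    (h1 : qPochInf ((q : ℂ) ^ 2) (qpow q (s + Complex.I * ν)) ≠ 0)
    (h2 : qPochInf ((q : ℂ) ^ 2) (qpow q (s - Complex.I * ν)) ≠ 0) :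
    qpow q (-s) * (1 - qpow q (s + Complex.I * ν)) * (1 - qpow q (s - Complex.I * ν))
        * gMB q δ ν s
      = (1 - (q : ℂ) ^ 2) ^ 2 * qpow q (((δ : ℂ) - 1) * s - 2) * gMB q δ ν (s + 2) := by
  set Q : ℂ := (q : ℂ) ^ 2 with hQdef
  have hQnorm : ‖Q‖ < 1 := by
    rw [hQdef, norm_pow, Complex.norm_real, Real.norm_eq_abs, abs_of_pos hq0]
    nlinarith
  set ap := qpow q (s + Complex.I * ν) with hap
  set am := qpow q (s - Complex.I * ν) with ham
  set L : ℂ := (Real.log (1 - q ^ 2) : ℂ) with hL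
  have hq2pos : (0:ℝ) < 1 - q ^ 2 := by nlinarith
  have hexpL : Complex.exp L = 1 - Q := by
    rw [hL, ← Complex.ofReal_exp, Real.exp_log hq2pos, hQdef]
    push_cast; ring
  have hshp : qPochInf Q ap = (1 - ap) * qPochInf Q (Q * ap) := qPoch_shift hQnorm ap
  have hshm : qPochInf Q am = (1 - am) * qPochInf Q (Q * am) := qPoch_shift hQnorm am
  rw [hshp] at h1
  rw [hshm] at h2
  have h1a : (1 - ap) ≠ 0 := fun h => h1 (by rw [h, zero_mul])
  have h1b : qPochInf Q (Q * ap) ≠ 0 := fun h => h1 (by rw [h, mul_zero])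
  have h2a : (1 - am) ≠ 0 := fun h => h2 (by rw [h, zero_mul])
  have h2b : qPochInf Q (Q * am) ≠ 0 := fun h => h2 (by rw [h, mul_zero])
  -- argument normalizations
  have harg1 : qpow q (2 * ((s + Complex.I * ν) / 2)) = ap := by
    rw [hap]; congr 1; ring
  have harg2 : qpow q (2 * ((s - Complex.I * ν) / 2)) = am := by
    rw [ham]; congr 1; ring
  have harg3 : qpow q (2 * ((s + 2 + Complex.I * ν) / 2)) = Q * ap := by
    rw [show (2:ℂ) * ((s + 2 + Complex.I * ν) / 2) = 2 + (s + Complex.I * ν) by ring,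
      qpow_add, qpow_two hq0, hap, hQdef]
  have harg4 : qpow q (2 * ((s + 2 - Complex.I * ν) / 2)) = Q * am := by
    rw [show (2:ℂ) * ((s + 2 - Complex.I * ν) / 2) = 2 + (s - Complex.I * ν) by ring,
      qpow_add, qpow_two hq0, ham, hQdef]
  have hexp3 : Complex.exp ((1 - (s + 2 + Complex.I * ν) / 2) * L)
      = Complex.exp ((1 - (s + Complex.I * ν) / 2) * L) / (1 - Q) := by
    rw [show (1 - (s + 2 + Complex.I * ν) / 2) * L
        = (1 - (s + Complex.I * ν) / 2) * L - L by ring, Complex.exp_sub, hexpL]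
  have hexp4 : Complex.exp ((1 - (s + 2 - Complex.I * ν) / 2) * L)
      = Complex.exp ((1 - (s - Complex.I * ν) / 2) * L) / (1 - Q) := by
    rw [show (1 - (s + 2 - Complex.I * ν) / 2) * L
        = (1 - (s - Complex.I * ν) / 2) * L - L by ring, Complex.exp_sub, hexpL]
  have key : qpow q (-s) * qpow q (-((δ : ℂ) * s ^ 2 / 4) + (2 + (δ : ℂ)) * s / 2)
      = qpow q (((δ : ℂ) - 1) * s - 2)
        * qpow q (-((δ : ℂ) * (s + 2) ^ 2 / 4) + (2 + (δ : ℂ)) * (s + 2) / 2) := by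
    rw [← qpow_add, ← qpow_add]; congr 1; ring
  have h1Q : (1 : ℂ) - Q ≠ 0 := by
    rw [hQdef]
    intro h
    have : ((q:ℂ))^2 = 1 := by linear_combination -h
    have : (q:ℝ)^2 = 1 := by exact_mod_cast this
    nlinarith
  unfold gMB qGamma2
  rw [harg1, harg2, harg3, harg4, hshp, hshm, hexp3, hexp4, ← hL, ← hQdef]
  set E1 := qpow q (-s) with hE1
  set E2 := qpow q (-((δ : ℂ) * s ^ 2 / 4) + (2 + (δ : ℂ)) * s / 2) with hE2
  set E3 := qpow q (((δ : ℂ) - 1) * s - 2) with hE3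
  set E4 := qpow q (-((δ : ℂ) * (s + 2) ^ 2 / 4) + (2 + (δ : ℂ)) * (s + 2) / 2) with hE4
  set C := qPochInf Q Q with hC
  set X := Complex.exp ((1 - (s + Complex.I * ↑ν) / 2) * L) with hX
  set Y := Complex.exp ((1 - (s - Complex.I * ↑ν) / 2) * L) with hY
  set Pp := qPochInf Q (Q * ap) with hPp
  set Pm := qPochInf Q (Q * am) with hPm
  have hE3ne : E3 ≠ 0 := Complex.exp_ne_zero _
  have hE4eq : E4 = E1 * E2 / E3 := by
    rw [eq_div_iff hE3ne]; linear_combination -key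
  rw [hE4eq]
  field_simp
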